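/- Let n ≥ 1, set b_j = {2 binom(2(n−1), n−1)}^{1/(2n)} e_j with e_j = exp( ((2j − n + 1)/(2n)) π i ) for j = 0, …, 2n−1, and suppose z_j : (1−ε, 1) → ℂ (for some ε ∈ (0,1)) are functions satisfying | z_j(r) − ( −1 + b_j (1−r)^{1/(2n)} − (1/2) b_j² (1−r)^{1/n} ) | ≤ C₀ (1−r)^{3/(2n)} for some constant C₀ > 0 and all r ∈ (1−ε, 1). Then there exist a constant C_n ∈ ℂ depending only on n, a constant C′ > 0, and ε′ ∈ (0, ε) such that for every k ∈ {0, 1, …, 2n−1} and every r ∈ (1−ε′, 1): | Π_{j≠k} (z_k(r) − z_j(r)) − 2n (−1)^{n−1} e_k^{−1} binom(2(n−1), n−1)^{(2n−1)/(2n)} (1−r²)^{(2n−1)/(2n)} (1 − C_n e_k (1−r²)^{1/(2n)}) | ≤ C′ (1−r²)^{(2n−1)/(2n) + 1/n}. -/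

import Mathlib

open Complex Finset

noncomputable def ecoef (n k : ℕ) : ℂ :=
  Complex.exp (((2 * (k : ℂ) - (n : ℂ) + 1) / (2 * (n : ℂ))) * (Real.pi : ℂ) * Complex.I)

-- zeta
noncomputable def zet (n : ℕ) : ℂ := Complex.exp ((Real.pi : ℂ) / (n : ℂ) * Complex.I)

lemma zet_prim (n : ℕ) (hn : 1 ≤ n) : IsPrimitiveRoot (zet n) (2 * n) := by
  have h := Complex.isPrimitiveRoot_exp (2 * n) (by omega)
  have he : zet n = Complex.exp (2 * Real.pi * Complex.I / (2 * n : ℕ)) := by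
    unfold zet
    congr 1
    have hn' : (n : ℂ) ≠ 0 := Nat.cast_ne_zero.mpr (by omega)
    push_cast
    field_simp
  rw [he]; exact h

lemma ecoef_eq (n : ℕ) (hn : 1 ≤ n) (j : ℕ) : ecoef n j = ecoef n 0 * zet n ^ j := by
  have hn' : (n : ℂ) ≠ 0 := Nat.cast_ne_zero.mpr (by omega)
  rw [ecoef, ecoef, zet, ← Complex.exp_nat_mul, ← Complex.exp_add]
  congr 1
  field_simp
  ring

lemma ecoef_ne_zero (n k : ℕ) : ecoef n k ≠ 0 := Complex.exp_ne_zero _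

lemma abs_ecoef (n : ℕ) (hn : 1 ≤ n) (k : ℕ) : ‖ecoef n k‖ = 1 := by
  have hn' : (n : ℂ) ≠ 0 := Nat.cast_ne_zero.mpr (by omega)
  rw [ecoef]
  have : ((2 * (k : ℂ) - (n : ℂ) + 1) / (2 * (n : ℂ))) * (Real.pi : ℂ) =
      (((2 * (k : ℝ) - (n : ℝ) + 1) / (2 * (n : ℝ))) * Real.pi : ℝ) := by
    push_cast; ring
  rw [this, Complex.norm_exp_ofReal_mul_I]

lemma zet_pow_2n (n : ℕ) (hn : 1 ≤ n) : zet n ^ (2 * n) = 1 := (zet_prim n hn).pow_eq_one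

lemma ecoef_pow (n : ℕ) (hn : 1 ≤ n) (k : ℕ) : ecoef n k ^ (2 * n) = (-1 : ℂ) ^ (n - 1) := by
  have hn' : (n : ℂ) ≠ 0 := Nat.cast_ne_zero.mpr (by omega)
  have h1 : ecoef n k ^ (2 * n) = Complex.exp ((2 * (k:ℂ) - n + 1) * Real.pi * Complex.I) := by
    rw [ecoef, ← Complex.exp_nat_mul]
    congr 1
    field_simp
    push_cast
    ring
  have h2 : (-1 : ℂ) ^ (n - 1) = Complex.exp (((n : ℂ) - 1) * Real.pi * Complex.I) := by
    rw [← Complex.exp_pi_mul_I, ← Complex.exp_nat_mul]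
    congr 1
    rw [Nat.cast_sub hn]
    push_cast
    ring
  rw [h1, h2]
  rw [Complex.exp_eq_exp_iff_exists_int]
  exact ⟨(k : ℤ) - n + 1, by push_cast; ring⟩

lemma zet_pow_mod (n : ℕ) (hn : 1 ≤ n) (a : ℕ) : zet n ^ (a % (2 * n)) = zet n ^ a := by
  conv_rhs => rw [← Nat.div_add_mod a (2 * n)]
  rw [pow_add, pow_mul, zet_pow_2n n hn, one_pow, one_mul]

lemma sum_ecoef (n : ℕ) (hn : 1 ≤ n) : ∑ j : Fin (2 * n), ecoef n j = 0 := by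
  have hz1 : zet n ≠ 1 := (zet_prim n hn).ne_one (by omega)
  have : ∑ j : Fin (2 * n), ecoef n j = ecoef n 0 * ∑ i ∈ Finset.range (2 * n), zet n ^ i := by
    rw [Finset.mul_sum, ← Fin.sum_univ_eq_sum_range]
    exact Finset.sum_congr rfl fun j _ => ecoef_eq n hn j
  rw [this, geom_sum_eq hz1, zet_pow_2n n hn]
  simp

lemma prod_one_sub_zet (n : ℕ) (hn : 1 ≤ n) :
    ∏ m ∈ Finset.univ.erase (⟨0, by omega⟩ : Fin (2 * n)), (1 - zet n ^ (m : ℕ)) = (2 * n : ℂ) := by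
  haveI : NeZero (2 * n) := ⟨by omega⟩
  have h0 : (⟨0, by omega⟩ : Fin (2 * n)) = 0 := rfl
  rw [h0]
  have hprim : IsPrimitiveRoot (zet n) ((2 * n - 1) + 1) := by
    have : (2 * n - 1) + 1 = 2 * n := by omega
    rw [this]; exact zet_prim n hn
  have key := hprim.prod_one_sub_pow_eq_order
  have hre : ∏ m ∈ Finset.univ.erase (0 : Fin (2 * n)), (1 - zet n ^ (m : ℕ))
      = ∏ k ∈ Finset.range (2 * n - 1), (1 - zet n ^ (k + 1)) := by
    refine Finset.prod_bij' (fun a _ => (a : ℕ) - 1) (fun b hb => ⟨b + 1, by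
      simp only [Finset.mem_range] at hb; omega⟩) ?_ ?_ ?_ ?_ ?_
    · intro a ha
      simp only [Finset.mem_erase, Finset.mem_univ, and_true, ← Fin.val_ne_iff,
        Fin.val_zero] at ha
      have := a.isLt
      simp only [Finset.mem_range]; omega
    · intro b hb
      simp only [Finset.mem_range] at hb
      simp only [Finset.mem_erase, Finset.mem_univ, and_true, ← Fin.val_ne_iff, Fin.val_zero]
      simp
    · intro a ha
      simp only [Finset.mem_erase, Finset.mem_univ, and_true, ← Fin.val_ne_iff,
        Fin.val_zero] at ha
      exact Fin.ext (by simp; omega)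
    · intro b hb; simp
    · intro a ha
      simp only [Finset.mem_erase, Finset.mem_univ, and_true, ← Fin.val_ne_iff,
        Fin.val_zero] at ha
      congr 2
      omega
  rw [hre, key]
  push_cast [Nat.cast_sub (by omega : 1 ≤ 2 * n)]
  ring

lemma prod_ecoef_sub (n : ℕ) (hn : 1 ≤ n) (k : Fin (2 * n)) :
    ∏ j ∈ Finset.univ.erase k, (ecoef n k - ecoef n j) =
      (2 * n : ℂ) * (-1 : ℂ) ^ (n - 1) * (ecoef n k)⁻¹ := by
  haveI : NeZero (2 * n) := ⟨by omega⟩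
  have hfac : ∀ m : Fin (2 * n), ecoef n k - ecoef n ((k + m : Fin (2 * n)) : ℕ)
      = ecoef n k * (1 - zet n ^ (m : ℕ)) := by
    intro m
    have hval : ((k + m : Fin (2 * n)) : ℕ) = ((k : ℕ) + (m : ℕ)) % (2 * n) := rfl
    rw [hval, ecoef_eq n hn (((k : ℕ) + (m : ℕ)) % (2 * n)), zet_pow_mod n hn, pow_add,
      ecoef_eq n hn (k : ℕ)]
    ring
  have hbij : ∏ j ∈ Finset.univ.erase k, (ecoef n k - ecoef n j)
      = ∏ m ∈ Finset.univ.erase (0 : Fin (2 * n)),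
          (ecoef n k - ecoef n ((k + m : Fin (2 * n)) : ℕ)) := by
    refine Finset.prod_bij' (fun a _ => a - k) (fun b _ => k + b) ?_ ?_ ?_ ?_ ?_
    · intro a ha
      simp only [Finset.mem_erase, Finset.mem_univ, and_true] at ha ⊢
      intro h; apply ha; rw [sub_eq_zero] at h; exact h
    · intro b hb
      simp only [Finset.mem_erase, Finset.mem_univ, and_true] at hb ⊢
      intro h
      apply hb
      have := congrArg (fun x => x - k) h
      simpa using this
    · intro a _; simp
    · intro b _; simp
    · intro a _
      congr 2
      simp
  rw [hbij]
  have hcong : ∏ m ∈ Finset.univ.erase (0 : Fin (2 * n)),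
        (ecoef n k - ecoef n ((k + m : Fin (2 * n)) : ℕ))
      = ∏ m ∈ Finset.univ.erase (0 : Fin (2 * n)),
          (ecoef n (k : ℕ) * (1 - zet n ^ (m : ℕ))) :=
    Finset.prod_congr rfl fun m _ => hfac m
  have h0 : (0 : Fin (2 * n)) = (⟨0, by omega⟩ : Fin (2 * n)) := rfl
  rw [hcong, Finset.prod_mul_distrib, Finset.prod_const, h0, prod_one_sub_zet n hn]
  have hcard : (Finset.univ.erase ((⟨0, by omega⟩ : Fin (2 * n)))).card = 2 * n - 1 := by
    rw [Finset.card_erase_of_mem (Finset.mem_univ _), Finset.card_univ, Fintype.card_fin]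
  rw [hcard]
  have hpow : ecoef n (k : ℕ) ^ (2 * n - 1) * ecoef n (k : ℕ) = (-1 : ℂ) ^ (n - 1) := by
    rw [← pow_succ, (by omega : 2 * n - 1 + 1 = 2 * n), ecoef_pow n hn]
  have hne := ecoef_ne_zero n (k : ℕ)
  field_simp
  linear_combination (n : ℂ) * hpow

lemma prod_diff_est {ι : Type*} [DecidableEq ι] (s : Finset ι) (x y : ι → ℂ) (M d : ℝ)
    (hM : 0 ≤ M) (hd : 0 ≤ d)
    (hx : ∀ i ∈ s, ‖x i‖ ≤ M) (hy : ∀ i ∈ s, ‖y i‖ ≤ M)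
    (hxy : ∀ i ∈ s, ‖x i - y i‖ ≤ d) :
    ‖∏ i ∈ s, x i - ∏ i ∈ s, y i‖ ≤ s.card * d * M ^ (s.card - 1) := by
  induction s using Finset.induction_on with
  | empty => simp
  | @insert a s ha ih =>
    have hx' : ∀ i ∈ s, ‖x i‖ ≤ M := fun i hi => hx i (Finset.mem_insert_of_mem hi)
    have hy' : ∀ i ∈ s, ‖y i‖ ≤ M := fun i hi => hy i (Finset.mem_insert_of_mem hi)
    have hxy' : ∀ i ∈ s, ‖x i - y i‖ ≤ d := fun i hi => hxy i (Finset.mem_insert_of_mem hi)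
    have IH := ih hx' hy' hxy'
    rw [Finset.prod_insert ha, Finset.prod_insert ha]
    have key : x a * ∏ i ∈ s, x i - y a * ∏ i ∈ s, y i
        = x a * (∏ i ∈ s, x i - ∏ i ∈ s, y i) + (x a - y a) * ∏ i ∈ s, y i := by ring
    rw [key]
    have hya : ‖∏ i ∈ s, y i‖ ≤ M ^ s.card := by
      calc ‖∏ i ∈ s, y i‖ ≤ ∏ i ∈ s, ‖y i‖ := norm_prod_le _ _
        _ ≤ ∏ i ∈ s, M := Finset.prod_le_prod (fun i _ => norm_nonneg _) (fun i hi => hy' i hi)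
        _ = M ^ s.card := by rw [Finset.prod_const]
    have h1 : ‖x a * (∏ i ∈ s, x i - ∏ i ∈ s, y i)‖ ≤ M * (s.card * d * M ^ (s.card - 1)) := by
      rw [norm_mul]
      exact mul_le_mul (hx a (Finset.mem_insert_self a s)) IH (norm_nonneg _) hM
    have h2 : ‖(x a - y a) * ∏ i ∈ s, y i‖ ≤ d * M ^ s.card := by
      rw [norm_mul]
      exact mul_le_mul (hxy a (Finset.mem_insert_self a s)) hya (norm_nonneg _)  hd
    have hcard : (insert a s).card = s.card + 1 := Finset.card_insert_of_notMem ha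
    rw [hcard]
    calc ‖x a * (∏ i ∈ s, x i - ∏ i ∈ s, y i) + (x a - y a) * ∏ i ∈ s, y i‖
        ≤ ‖x a * (∏ i ∈ s, x i - ∏ i ∈ s, y i)‖ + ‖(x a - y a) * ∏ i ∈ s, y i‖ := norm_add_le _ _
      _ ≤ M * (s.card * d * M ^ (s.card - 1)) + d * M ^ s.card := add_le_add h1 h2
      _ ≤ (s.card + 1) * d * M ^ (s.card + 1 - 1) := by
          rcases Nat.eq_zero_or_pos s.card with h | h
          · simp [h]
          · have : M * ((s.card : ℝ) * d * M ^ (s.card - 1)) = s.card * d * M ^ (s.card - 1 + 1) := by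
              ring
            rw [this, (by omega : s.card - 1 + 1 = s.card)]
            have : (s.card + 1 : ℕ) - 1 = s.card := by omega
            rw [this]
            push_cast
            nlinarith [pow_nonneg hM s.card, mul_nonneg (mul_nonneg (Nat.cast_nonneg s.card) hd) (pow_nonneg hM s.card)]
      _ = ((s.card + 1 : ℕ) : ℝ) * d * M ^ (s.card + 1 - 1) := by push_cast; ring

lemma prod_one_add_est {ι : Type*} [DecidableEq ι] (s : Finset ι) (x : ι → ℂ) (ρ : ℝ)
    (hρ0 : 0 ≤ ρ) (hρ1 : ρ ≤ 1) (hx : ∀ i ∈ s, ‖x i‖ ≤ ρ) :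
    ‖∏ i ∈ s, (1 + x i) - (1 + ∑ i ∈ s, x i)‖ ≤ 3 ^ s.card * ρ ^ 2 := by
  induction s using Finset.induction_on with
  | empty => simp [pow_two]; positivity
  | @insert a s ha ih =>
    have hx' : ∀ i ∈ s, ‖x i‖ ≤ ρ := fun i hi => hx i (Finset.mem_insert_of_mem hi)
    have IH := ih hx'
    rw [Finset.prod_insert ha, Finset.sum_insert ha]
    have key : (1 + x a) * ∏ i ∈ s, (1 + x i) - (1 + (x a + ∑ i ∈ s, x i))
        = (1 + x a) * (∏ i ∈ s, (1 + x i) - (1 + ∑ i ∈ s, x i)) + x a * ∑ i ∈ s, x i := by ring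
    rw [key]
    have hsum : ‖∑ i ∈ s, x i‖ ≤ s.card * ρ := by
      calc ‖∑ i ∈ s, x i‖ ≤ ∑ i ∈ s, ‖x i‖ := norm_sum_le _ _
        _ ≤ ∑ i ∈ s, ρ := Finset.sum_le_sum hx'
        _ = s.card * ρ := by rw [Finset.sum_const, nsmul_eq_mul]
    have h1a : ‖(1 + x a)‖ ≤ 2 := by
      calc ‖(1 + x a)‖ ≤ ‖(1 : ℂ)‖ + ‖x a‖ := norm_add_le _ _
        _ ≤ 1 + 1 := by
            have := hx a (Finset.mem_insert_self a s)
            simp only [norm_one]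
            linarith
        _ = 2 := by norm_num
    have hcard : (insert a s).card = s.card + 1 := Finset.card_insert_of_notMem ha
    rw [hcard]
    have hxa := hx a (Finset.mem_insert_self a s)
    calc ‖(1 + x a) * (∏ i ∈ s, (1 + x i) - (1 + ∑ i ∈ s, x i)) + x a * ∑ i ∈ s, x i‖
        ≤ ‖(1 + x a)‖ * ‖∏ i ∈ s, (1 + x i) - (1 + ∑ i ∈ s, x i)‖ + ‖x a‖ * ‖∑ i ∈ s, x i‖ := by
          refine (norm_add_le _ _).trans ?_
          rw [norm_mul, norm_mul]
      _ ≤ 2 * (3 ^ s.card * ρ ^ 2) + ρ * (s.card * ρ) := by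
          refine add_le_add (mul_le_mul h1a IH (norm_nonneg _) (by norm_num)) ?_
          exact mul_le_mul hxa hsum (norm_nonneg _) hρ0
      _ ≤ 3 ^ (s.card + 1) * ρ ^ 2 := by
          have hc3 : (s.card : ℝ) ≤ 3 ^ s.card := by
            calc (s.card : ℝ) ≤ 2 ^ s.card := by exact_mod_cast (Nat.lt_two_pow_self (n := s.card)) |>.le
              _ ≤ 3 ^ s.card := by
                  apply pow_le_pow_left₀ (by norm_num) (by norm_num)
          have : ρ * ((s.card : ℝ) * ρ) = (s.card : ℝ) * ρ ^ 2 := by ring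
          rw [this, pow_succ (3:ℝ) s.card]
          nlinarith [mul_nonneg (sub_nonneg.mpr hc3) (sq_nonneg ρ)]

lemma rpow_pow (δ : ℝ) (hδ : 0 ≤ δ) (c : ℝ) (m : ℕ) : (δ ^ c) ^ m = δ ^ (c * m) := by
  rw [← Real.rpow_natCast (δ ^ c) m, ← Real.rpow_mul hδ]

noncomputable def bcoef (n j : ℕ) : ℂ :=
  Complex.ofReal ((2 * (Nat.choose (2 * (n - 1)) (n - 1)) : ℝ) ^ ((1 : ℝ) / (2 * (n : ℝ)))) *
    ecoef n j

set_option maxHeartbeats 1000000 in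
/-- if `z_j(r)` obey the Puiseux expansion with coefficients `b_j`, then
`Π_{j≠k}(z_k(r) - z_j(r)) = 2n (-1)^{n-1} e_k⁻¹ binom(2(n-1),n-1)^{(2n-1)/(2n)}
(1-r²)^{(2n-1)/(2n)} (1 - C_n e_k (1-r²)^{1/(2n)}) + O((1-r²)^{(2n-1)/(2n)+1/n})`. -/
theorem stmt_19 (n : ℕ) (hn : 1 ≤ n) (ε : ℝ) (hε : ε ∈ Set.Ioo (0 : ℝ) 1)
    (C₀ : ℝ) (hC₀ : 0 < C₀) (zs : Fin (2 * n) → ℝ → ℂ)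
    (hzs : ∀ (j : Fin (2 * n)), ∀ r ∈ Set.Ioo (1 - ε) 1,
      ‖zs j r - (-1 + bcoef n j * Complex.ofReal ((1 - r) ^ ((1 : ℝ) / (2 * (n : ℝ))))
          - (1 / 2) * (bcoef n j) ^ 2 * Complex.ofReal ((1 - r) ^ ((1 : ℝ) / (n : ℝ))))‖
        ≤ C₀ * (1 - r) ^ ((3 : ℝ) / (2 * (n : ℝ)))) :
    ∃ Cn : ℂ, ∃ C' > 0, ∃ ε' ∈ Set.Ioo (0 : ℝ) ε, ∀ (k : Fin (2 * n)),
      ∀ r ∈ Set.Ioo (1 - ε') 1,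
        ‖(∏ j ∈ Finset.univ.erase k, (zs k r - zs j r))
          - (2 * (n : ℂ)) * (-1 : ℂ) ^ (n - 1) * (ecoef n k)⁻¹
            * Complex.ofReal ((Nat.choose (2 * (n - 1)) (n - 1) : ℝ)
                ^ ((2 * (n : ℝ) - 1) / (2 * (n : ℝ))))
            * Complex.ofReal ((1 - r ^ 2) ^ ((2 * (n : ℝ) - 1) / (2 * (n : ℝ))))
            * (1 - Cn * ecoef n k
                * Complex.ofReal ((1 - r ^ 2) ^ ((1 : ℝ) / (2 * (n : ℝ)))))‖
          ≤ C' * (1 - r ^ 2) ^ ((2 * (n : ℝ) - 1) / (2 * (n : ℝ)) + 1 / (n : ℝ)) := by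
  have hn0 : (0:ℝ) < (n:ℝ) := by exact_mod_cast Nat.pos_of_ne_zero (by omega)
  have hnne : (n:ℝ) ≠ 0 := ne_of_gt hn0
  obtain ⟨Cr, hCr_def⟩ : ∃ Cr : ℝ, Cr = ((Nat.choose (2 * (n - 1)) (n - 1) : ℕ) : ℝ) := ⟨_, rfl⟩
  have hCr1 : 1 ≤ Cr := by
    rw [hCr_def]
    exact Nat.one_le_cast.mpr (Nat.choose_pos (by omega))
  have hCr0 : 0 < Cr := lt_of_lt_of_le one_pos hCr1
  obtain ⟨β, hβ_def⟩ : ∃ β : ℝ, β = (2 * Cr) ^ ((1 : ℝ) / (2 * (n : ℝ))) := ⟨_, rfl⟩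
  have hβ1 : 1 ≤ β := by
    rw [hβ_def]; exact Real.one_le_rpow (by linarith) (by positivity)
  have hβ0 : 0 < β := lt_of_lt_of_le one_pos hβ1
  have hbc : ∀ j : ℕ, bcoef n j = (β : ℂ) * ecoef n j := by
    intro j
    rw [hβ_def, hCr_def]
    rfl
  have habsb : ∀ j : ℕ, ‖bcoef n j‖ = β := by
    intro j
    rw [hbc, norm_mul, abs_ecoef n hn j, Complex.norm_real, Real.norm_eq_abs,
      abs_of_pos hβ0, mul_one]
  -- constants
  obtain ⟨M₀, hM₀_def⟩ : ∃ M₀ : ℝ, M₀ = 2 * β + β ^ 2 + 2 * C₀ := ⟨_, rfl⟩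
  have hM₀1 : 1 ≤ M₀ := by rw [hM₀_def]; nlinarith
  have hM₀0 : 0 < M₀ := lt_of_lt_of_le one_pos hM₀1
  obtain ⟨K₁, hK₁_def⟩ : ∃ K₁ : ℝ, K₁ = (2 * n) * (2 * C₀) * M₀ ^ (2 * n - 2) := ⟨_, rfl⟩
  obtain ⟨K₂, hK₂_def⟩ : ∃ K₂ : ℝ, K₂ = (2 * n * β ^ (2 * n - 1)) * 3 ^ (2 * n) * β ^ 2 := ⟨_, rfl⟩
  obtain ⟨K₃, hK₃_def⟩ : ∃ K₃ : ℝ, K₃ = 2 * n * (Cr + n * Cr) := ⟨_, rfl⟩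
  have hK₁0 : 0 ≤ K₁ := by
    rw [hK₁_def]
    have := pow_nonneg (le_of_lt hM₀0) (2 * n - 2)
    positivity
  have hK₂0 : 0 ≤ K₂ := by
    rw [hK₂_def]
    have := pow_nonneg (le_of_lt hβ0) (2 * n - 1)
    positivity
  have hK₃0 : 0 ≤ K₃ := by rw [hK₃_def]; positivity
  have hmin0 : 0 < min ε (1/(2*Cr)) := lt_min hε.1 (by
    apply one_div_pos.mpr; linarith)
  refine ⟨(((n:ℝ) - 1) * Cr ^ ((1:ℝ)/(2*(n:ℝ))) : ℝ), K₁ + K₂ + K₃ + 1, by linarith,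
    min ε (1/(2*Cr)) / 2, ⟨⟨by linarith, ?_⟩, ?_⟩⟩
  · have h1 : min ε (1/(2*Cr)) ≤ ε := min_le_left _ _
    linarith
  intro k r hr
  -- basic facts about r
  have hεm2 : min ε (1/(2*Cr)) ≤ 1/(2*Cr) := min_le_right _ _
  have hεm1 : min ε (1/(2*Cr)) ≤ ε := min_le_left _ _
  have hδ0 : 0 < 1 - r := by linarith [hr.2]
  obtain ⟨δ, hδ_def⟩ : ∃ δ : ℝ, δ = 1 - r := ⟨_, rfl⟩
  have hδ0' : 0 < δ := hδ_def ▸ hδ0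
  have hδε : δ < min ε (1/(2*Cr)) / 2 := by rw [hδ_def]; linarith [hr.1]
  have hδε' : δ < ε := by
    have h2 : 0 < min ε (1/(2*Cr)) := lt_min hε.1 (by positivity)
    linarith
  have hδ4 : δ < 1/(4*Cr) := by
    have h1 : min ε (1/(2*Cr))/2 ≤ 1/(2*Cr)/2 := by linarith
    rw [div_div] at h1
    have h2 : (1:ℝ)/(2*Cr*2) = 1/(4*Cr) := by ring_nf
    linarith
  have hδCr : 2 * Cr * δ ≤ 1 := by
    have h := mul_lt_mul_of_pos_left hδ4 (show (0:ℝ) < 2*Cr by linarith)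
    have h2 : 2*Cr*(1/(4*Cr)) = 1/2 := by field_simp; ring
    linarith
  have hδ1 : δ ≤ 1/2 := by
    have h14 : 1/(4*Cr) ≤ 1/4 := by
      rw [div_le_div_iff₀ (by linarith) (by norm_num)]
      nlinarith
    linarith
  have hr0 : 0 ≤ r := by rw [hδ_def] at hδ1; linarith
  have hr1 : r < 1 := hr.2
  have h1r2' : 1 - r^2 = δ * (1 + r) := by rw [hδ_def]; ring
  have h1r2 : 0 < 1 - r^2 := by
    rw [h1r2']; exact mul_pos hδ0' (by linarith)
  have hδ1r2 : δ ≤ 1 - r^2 := by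
    rw [h1r2']
    have : δ * 1 ≤ δ * (1 + r) := mul_le_mul_of_nonneg_left (by linarith) hδ0'.le
    linarith
  have h1r2le : 1 - r^2 ≤ 1 := by nlinarith [sq_nonneg r]
  -- t and powers
  obtain ⟨t, ht_def⟩ : ∃ t : ℝ, t = δ ^ ((1:ℝ)/(2*(n:ℝ))) := ⟨_, rfl⟩
  have ht0 : 0 < t := ht_def ▸ Real.rpow_pos_of_pos hδ0' _
  have ht1 : t ≤ 1 := by
    rw [ht_def]; exact Real.rpow_le_one hδ0'.le (by linarith) (by positivity)
  have ht2n : t ^ (2*n) = δ := by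
    rw [ht_def, rpow_pow δ hδ0'.le, show (1:ℝ)/(2*(n:ℝ)) * ((2*n : ℕ):ℝ) = 1 by
      push_cast; field_simp, Real.rpow_one]
  have ht3 : δ ^ ((3:ℝ)/(2*(n:ℝ))) = t ^ 3 := by
    rw [ht_def, rpow_pow δ hδ0'.le ((1:ℝ)/(2*(n:ℝ))) 3]
    congr 1
    push_cast
    ring
  have ht2 : δ ^ ((1:ℝ)/(n:ℝ)) = t ^ 2 := by
    rw [ht_def, rpow_pow δ hδ0'.le ((1:ℝ)/(2*(n:ℝ))) 2]
    congr 1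
    push_cast
    field_simp
  -- v and q
  obtain ⟨v, hv_def⟩ : ∃ v : ℝ, v = β * t := ⟨_, rfl⟩
  have hv0 : 0 < v := hv_def ▸ mul_pos hβ0 ht0
  have hv_eq : v = (2 * Cr * δ) ^ ((1:ℝ)/(2*(n:ℝ))) := by
    rw [hv_def, hβ_def, ht_def, ← Real.mul_rpow (by linarith) hδ0'.le]
  have hv1 : v ≤ 1 := by
    rw [hv_eq]
    exact Real.rpow_le_one (by positivity) hδCr (by positivity)
  obtain ⟨s1, hs1_def⟩ : ∃ s1 : ℝ, s1 = (1 - r^2) ^ ((1:ℝ)/(2*(n:ℝ))) := ⟨_, rfl⟩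
  obtain ⟨q, hq_def⟩ : ∃ q : ℝ, q = Cr ^ ((1:ℝ)/(2*(n:ℝ))) * s1 := ⟨_, rfl⟩
  have hq_eq : q = (Cr * (1 - r^2)) ^ ((1:ℝ)/(2*(n:ℝ))) := by
    rw [hq_def, hs1_def, ← Real.mul_rpow hCr0.le h1r2.le]
  have hq0 : 0 < q := by
    rw [hq_eq]; exact Real.rpow_pos_of_pos (mul_pos hCr0 h1r2) _
  have hqv : q ≤ v := by
    rw [hq_eq, hv_eq]
    apply Real.rpow_le_rpow (mul_pos hCr0 h1r2).le ?_ (by positivity)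
    have hdd : 2 * Cr * δ - Cr * (1 - r^2) = Cr * δ^2 := by
      rw [hδ_def]; ring
    have hnn : 0 ≤ Cr * δ^2 := mul_nonneg hCr0.le (sq_nonneg δ)
    linarith
  have htq : t ≤ q := by
    rw [ht_def, hq_eq]
    apply Real.rpow_le_rpow hδ0'.le ?_ (by positivity)
    have := mul_le_mul_of_nonneg_right hCr1 h1r2.le
    linarith
  have hv2n : v ^ (2*n) = 2 * Cr * δ := by
    rw [hv_eq, rpow_pow _ (mul_pos (mul_pos two_pos hCr0) hδ0').le _ (2*n), show (1:ℝ)/(2*(n:ℝ)) * ((2*n : ℕ):ℝ) = 1 by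
      push_cast; field_simp, Real.rpow_one]
  have hq2n : q ^ (2*n) = Cr * (1 - r^2) := by
    rw [hq_eq, rpow_pow _ (mul_pos hCr0 h1r2).le _ (2*n),
      show (1:ℝ)/(2*(n:ℝ)) * ((2*n : ℕ):ℝ) = 1 by push_cast; field_simp, Real.rpow_one]
  have hdiff2n : v ^ (2*n) - q ^ (2*n) = Cr * δ^2 := by
    rw [hv2n, hq2n, hδ_def]; ring
  -- D1 bound
  have hD1nn : 0 ≤ v ^ (2*n-1) - q ^ (2*n-1) :=
    sub_nonneg.mpr (pow_le_pow_left₀ hq0.le hqv _)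
  have hD1 : v ^ (2*n-1) - q ^ (2*n-1) ≤ Cr * δ * t := by
    have h1 : t * (v ^ (2*n-1) - q ^ (2*n-1)) ≤ q * (v ^ (2*n-1) - q ^ (2*n-1)) :=
      mul_le_mul_of_nonneg_right htq hD1nn
    have h2 : q * (v ^ (2*n-1) - q ^ (2*n-1)) ≤ Cr * δ^2 := by
      have ha : q * v ^ (2*n-1) ≤ v * v ^ (2*n-1) :=
        mul_le_mul_of_nonneg_right hqv (pow_nonneg hv0.le _)
      have hb : v * v ^ (2*n-1) = v ^ (2*n) := by
        rw [show 2*n = (2*n-1)+1 from by omega]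
        exact (pow_succ' v _).symm
      have hc : q * q ^ (2*n-1) = q ^ (2*n) := by
        rw [show 2*n = (2*n-1)+1 from by omega]
        exact (pow_succ' q _).symm
      calc q * (v ^ (2*n-1) - q ^ (2*n-1)) = q * v ^ (2*n-1) - q ^ (2*n) := by
            rw [mul_sub, hc]
        _ ≤ v ^ (2*n) - q ^ (2*n) := by rw [← hb] at *; linarith
        _ = Cr * δ^2 := hdiff2n
    have h3 : Cr * δ^2 ≤ Cr * δ * t * t := by
      have : δ = t^(2*n) := ht2n.symm
      rw [this]
      have htt : t^(2*n) ≤ t^2 := pow_le_pow_of_le_one ht0.le ht1 (by omega)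
      calc Cr * (t^(2*n))^2 = Cr * t^(2*n) * t^(2*n) := by ring
        _ ≤ Cr * t^(2*n) * t^2 := by
            apply mul_le_mul_of_nonneg_left htt
            positivity
        _ = Cr * t^(2*n) * t * t := by ring
    have h4 : t * (v ^ (2*n-1) - q ^ (2*n-1)) ≤ (Cr * δ * t) * t := by
      calc t * (v ^ (2*n-1) - q ^ (2*n-1)) ≤ Cr * δ^2 := le_trans h1 h2
        _ ≤ Cr * δ * t * t := h3
    have := le_of_mul_le_mul_right (by
      calc (v ^ (2*n-1) - q ^ (2*n-1)) * t = t * (v ^ (2*n-1) - q ^ (2*n-1)) := by ring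
        _ ≤ (Cr * δ * t) * t := h4) ht0
    exact this
  -- complex setup
  obtain ⟨T, hT_def⟩ : ∃ T : ℂ, T = ((t : ℝ) : ℂ) := ⟨_, rfl⟩
  have hTnorm : ‖T‖ = t := by
    rw [hT_def, Complex.norm_real, Real.norm_eq_abs, abs_of_pos ht0]
  have hrε : r ∈ Set.Ioo (1 - ε) 1 := ⟨by rw [hδ_def] at hδε'; linarith, hr1⟩
  have hof1 : ((1 - r) ^ ((1:ℝ)/(2*(n:ℝ))) : ℝ) = t := by rw [← hδ_def, ← ht_def]
  have hof2 : ((1 - r) ^ ((1:ℝ)/(n:ℝ)) : ℝ) = t ^ 2 := by rw [← hδ_def, ht2]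
  have hof3 : ((1 - r) ^ ((3:ℝ)/(2*(n:ℝ))) : ℝ) = t ^ 3 := by rw [← hδ_def, ht3]
  obtain ⟨w, hw_def⟩ : ∃ w : Fin (2*n) → ℂ, ∀ j : Fin (2*n), w j =
      (bcoef n k - bcoef n j) * T - (1/2) * ((bcoef n k)^2 - (bcoef n j)^2) * T^2 :=
    ⟨fun j => (bcoef n k - bcoef n j) * T - (1/2) * ((bcoef n k)^2 - (bcoef n j)^2) * T^2,
      fun j => rfl⟩
  have hwnorm : ∀ j : Fin (2*n), ‖w j‖ ≤ (2*β + β^2) * t := by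
    intro j
    rw [hw_def]
    calc ‖(bcoef n k - bcoef n j) * T - (1/2) * ((bcoef n k)^2 - (bcoef n j)^2) * T^2‖
        ≤ ‖(bcoef n k - bcoef n j) * T‖ + ‖(1/2) * ((bcoef n k)^2 - (bcoef n j)^2) * T^2‖ :=
          norm_sub_le _ _
      _ ≤ (2*β) * t + (1/2) * (2 * β^2) * t^2 := by
          apply add_le_add
          · rw [norm_mul, hTnorm]
            apply mul_le_mul_of_nonneg_right ?_ ht0.le
            calc ‖bcoef n ↑k - bcoef n ↑j‖ ≤ ‖bcoef n ↑k‖ + ‖bcoef n ↑j‖ := norm_sub_le _ _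
              _ = 2*β := by rw [habsb, habsb]; ring
          · rw [norm_mul, norm_mul, norm_pow, hTnorm]
            apply mul_le_mul_of_nonneg_right ?_ (by positivity)
            rw [show ‖(1/2 : ℂ)‖ = 1/2 by norm_num]
            apply mul_le_mul_of_nonneg_left ?_ (by norm_num)
            calc ‖(bcoef n ↑k)^2 - (bcoef n ↑j)^2‖ ≤ ‖(bcoef n ↑k)^2‖ + ‖(bcoef n ↑j)^2‖ :=
                  norm_sub_le _ _
              _ = 2 * β^2 := by rw [norm_pow, norm_pow, habsb, habsb]; ring
      _ ≤ (2*β) * t + β^2 * t := by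
          have ht2le : t^2 ≤ t := by
            calc t^2 = t*t := sq t
              _ ≤ 1*t := mul_le_mul_of_nonneg_right ht1 ht0.le
              _ = t := one_mul t
          have : (1/2 : ℝ) * (2*β^2) * t^2 = β^2 * t^2 := by ring
          rw [this]
          have := mul_le_mul_of_nonneg_left ht2le (sq_nonneg β)
          linarith
      _ = (2*β + β^2) * t := by ring
  have hdiffw : ∀ j : Fin (2*n), ‖(zs k r - zs j r) - w j‖ ≤ 2*C₀*t^3 := by
    intro j
    have h1 := hzs k r hrε
    have h2 := hzs j r hrε
    have key : (zs k r - zs j r) - w j =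
        (zs k r - (-1 + bcoef n k * Complex.ofReal ((1 - r) ^ ((1 : ℝ) / (2 * (n : ℝ))))
          - (1 / 2) * (bcoef n k) ^ 2 * Complex.ofReal ((1 - r) ^ ((1 : ℝ) / (n : ℝ)))))
        - (zs j r - (-1 + bcoef n j * Complex.ofReal ((1 - r) ^ ((1 : ℝ) / (2 * (n : ℝ))))
          - (1 / 2) * (bcoef n j) ^ 2 * Complex.ofReal ((1 - r) ^ ((1 : ℝ) / (n : ℝ))))) := by
      rw [hw_def]
      simp only [hof1, hof2, hT_def]
      push_cast
      ring
    rw [key]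
    calc ‖_ - _‖ ≤ C₀ * (1 - r) ^ ((3 : ℝ) / (2 * (n : ℝ)))
          + C₀ * (1 - r) ^ ((3 : ℝ) / (2 * (n : ℝ))) := norm_sub_le_of_le h1 h2
      _ = 2*C₀*t^3 := by rw [hof3]; ring
  have hznorm : ∀ j : Fin (2*n), ‖zs k r - zs j r‖ ≤ M₀ * t := by
    intro j
    have ht3le : t^3 ≤ t := by
      calc t^3 = t^2*t := by ring
        _ ≤ 1*t := by
            apply mul_le_mul_of_nonneg_right ?_ ht0.le
            calc t^2 = t*t := sq t
              _ ≤ 1*1 := mul_le_mul ht1 ht1 ht0.le one_pos.le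
              _ = 1 := by norm_num
        _ = t := one_mul t
    calc ‖zs k r - zs j r‖ = ‖((zs k r - zs j r) - w j) + w j‖ := by ring_nf
      _ ≤ ‖(zs k r - zs j r) - w j‖ + ‖w j‖ := norm_add_le _ _
      _ ≤ 2*C₀*t^3 + (2*β + β^2)*t := add_le_add (hdiffw j) (hwnorm j)
      _ ≤ 2*C₀*t + (2*β + β^2)*t := by
          have := mul_le_mul_of_nonneg_left ht3le (by linarith : (0:ℝ) ≤ 2*C₀)
          linarith
      _ = M₀ * t := by rw [hM₀_def]; ring
  have hcardE : (Finset.univ.erase k).card = 2*n - 1 := by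
    rw [Finset.card_erase_of_mem (Finset.mem_univ _), Finset.card_univ, Fintype.card_fin]
  have hwnorm' : ∀ j : Fin (2*n), ‖w j‖ ≤ M₀ * t := by
    intro j
    refine le_trans (hwnorm j) ?_
    apply mul_le_mul_of_nonneg_right ?_ ht0.le
    rw [hM₀_def]; linarith
  have hstepA : ‖∏ j ∈ Finset.univ.erase k, (zs k r - zs j r) - ∏ j ∈ Finset.univ.erase k, w j‖
      ≤ K₁ * (δ * t) := by
    have hest := prod_diff_est (Finset.univ.erase k) (fun j => zs k r - zs j r) w
      (M₀ * t) (2*C₀*t^3) (by positivity) (by positivity)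
      (fun j _ => hznorm j) (fun j _ => hwnorm' j) (fun j _ => hdiffw j)
    rw [hcardE] at hest
    refine le_trans hest ?_
    have hc1 : ((2*n-1 : ℕ) : ℝ) ≤ 2*(n:ℝ) := by
      push_cast [Nat.cast_sub (by omega : 1 ≤ 2*n)]
      linarith
    have hexp : (M₀ * t) ^ (2*n-1-1) = M₀^(2*n-2) * t^(2*n-2) := by
      rw [show 2*n-1-1 = 2*n-2 from by omega, mul_pow]
    rw [hexp, hK₁_def]
    have htt : t^3 * t^(2*n-2) = δ * t := by
      rw [← pow_add, show 3 + (2*n-2) = 2*n+1 from by omega, pow_succ, ht2n]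
    calc ((2*n-1 : ℕ) : ℝ) * (2*C₀*t^3) * (M₀^(2*n-2) * t^(2*n-2))
        = ((2*n-1 : ℕ) : ℝ) * (2*C₀) * M₀^(2*n-2) * (t^3 * t^(2*n-2)) := by ring
      _ ≤ (2*(n:ℝ)) * (2*C₀) * M₀^(2*n-2) * (t^3 * t^(2*n-2)) := by
          apply mul_le_mul_of_nonneg_right ?_ (by positivity)
          apply mul_le_mul_of_nonneg_right ?_ (by positivity)
          apply mul_le_mul_of_nonneg_right hc1 (by linarith)
      _ = 2 * (n:ℝ) * (2*C₀) * M₀^(2*n-2) * (δ * t) := by rw [htt]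
  -- Step B: factor the model product
  obtain ⟨x, hx_def⟩ : ∃ x : Fin (2*n) → ℂ, ∀ j : Fin (2*n), x j =
      -((bcoef n k + bcoef n j)/2) * T :=
    ⟨fun j => -((bcoef n k + bcoef n j)/2) * T, fun j => rfl⟩
  have hfactor : ∀ j : Fin (2*n), w j = T * ((bcoef n k - bcoef n j) * (1 + x j)) := by
    intro j
    rw [hw_def, hx_def]
    ring
  have hprodw : ∏ j ∈ Finset.univ.erase k, w j
      = T^(2*n-1) * ((∏ j ∈ Finset.univ.erase k, (bcoef n k - bcoef n j))
          * ∏ j ∈ Finset.univ.erase k, (1 + x j)) := by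
    calc ∏ j ∈ Finset.univ.erase k, w j
        = ∏ j ∈ Finset.univ.erase k, (T * ((bcoef n k - bcoef n j) * (1 + x j))) :=
          Finset.prod_congr rfl fun j _ => hfactor j
      _ = (∏ _j ∈ Finset.univ.erase k, T) * ∏ j ∈ Finset.univ.erase k,
            ((bcoef n k - bcoef n j) * (1 + x j)) := Finset.prod_mul_distrib
      _ = T^(2*n-1) * ((∏ j ∈ Finset.univ.erase k, (bcoef n k - bcoef n j))
            * ∏ j ∈ Finset.univ.erase k, (1 + x j)) := by
          rw [Finset.prod_const, hcardE, Finset.prod_mul_distrib]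
  have hprodb : ∏ j ∈ Finset.univ.erase k, (bcoef n k - bcoef n j)
      = (β:ℂ)^(2*n-1) * ((2 * (n:ℂ)) * (-1 : ℂ)^(n-1) * (ecoef n k)⁻¹) := by
    calc ∏ j ∈ Finset.univ.erase k, (bcoef n k - bcoef n j)
        = ∏ j ∈ Finset.univ.erase k, ((β:ℂ) * (ecoef n k - ecoef n j)) := by
          refine Finset.prod_congr rfl fun j _ => ?_
          rw [hbc, hbc]
          ring
      _ = (β:ℂ)^(2*n-1) * ∏ j ∈ Finset.univ.erase k, (ecoef n k - ecoef n j) := by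
          rw [Finset.prod_mul_distrib, Finset.prod_const, hcardE]
      _ = (β:ℂ)^(2*n-1) * ((2 * (n:ℂ)) * (-1 : ℂ)^(n-1) * (ecoef n k)⁻¹) := by
          rw [prod_ecoef_sub n hn k]
  -- Step C: sum of x and product estimate
  have hsumb : ∑ j : Fin (2*n), bcoef n j = 0 := by
    have h1 : ∑ j : Fin (2*n), bcoef n j = (β:ℂ) * ∑ j : Fin (2*n), ecoef n j := by
      rw [Finset.mul_sum]
      exact Finset.sum_congr rfl fun j _ => hbc j
    rw [h1, sum_ecoef n hn, mul_zero]
  have hsumb' : ∑ j ∈ Finset.univ.erase k, bcoef n j = - bcoef n k := by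
    have h2 := Finset.sum_erase_add Finset.univ (fun j : Fin (2*n) => bcoef n j)
      (Finset.mem_univ k)
    linear_combination h2 + hsumb
  have hsumx : ∑ j ∈ Finset.univ.erase k, x j = -((n:ℂ) - 1) * bcoef n k * T := by
    have h1 : ∀ j : Fin (2*n), x j = -(T/2) * bcoef n k + -(T/2) * bcoef n j := by
      intro j
      rw [hx_def]
      ring
    calc ∑ j ∈ Finset.univ.erase k, x j
        = ∑ j ∈ Finset.univ.erase k, (-(T/2) * bcoef n k + -(T/2) * bcoef n j) :=
          Finset.sum_congr rfl fun j _ => h1 j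
      _ = (Finset.univ.erase k).card • (-(T/2) * bcoef n k)
            + -(T/2) * ∑ j ∈ Finset.univ.erase k, bcoef n j := by
          rw [Finset.sum_add_distrib, Finset.sum_const, Finset.mul_sum]
      _ = ((2*n-1 : ℕ) : ℂ) * (-(T/2) * bcoef n k) + -(T/2) * (- bcoef n k) := by
          rw [hcardE, hsumb', nsmul_eq_mul]
      _ = -((n:ℂ) - 1) * bcoef n k * T := by
          push_cast [Nat.cast_sub (by omega : 1 ≤ 2*n)]
          ring
  have hxnorm : ∀ j ∈ Finset.univ.erase k, ‖x j‖ ≤ v := by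
    intro j _
    rw [hx_def, norm_mul, hTnorm, norm_neg, norm_div]
    rw [show ‖(2 : ℂ)‖ = 2 by norm_num]
    rw [hv_def]
    apply mul_le_mul_of_nonneg_right ?_ ht0.le
    rw [div_le_iff₀ (by norm_num : (0:ℝ) < 2)]
    calc ‖bcoef n ↑k + bcoef n ↑j‖ ≤ ‖bcoef n ↑k‖ + ‖bcoef n ↑j‖ := norm_add_le _ _
      _ = 2*β := by rw [habsb, habsb]; ring
      _ = β * 2 := by ring
  have hprod1x : ‖∏ j ∈ Finset.univ.erase k, (1 + x j)
      - (1 + ∑ j ∈ Finset.univ.erase k, x j)‖ ≤ 3^(2*n) * v^2 := by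
    have h := prod_one_add_est (Finset.univ.erase k) x v hv0.le hv1 hxnorm
    rw [hcardE] at h
    refine le_trans h ?_
    apply mul_le_mul_of_nonneg_right ?_ (sq_nonneg v)
    apply pow_le_pow_right₀ (by norm_num : (1:ℝ) ≤ 3) (by omega)
  obtain ⟨Y, hY_def⟩ : ∃ Y : ℂ, Y = T^(2*n-1) * (β:ℂ)^(2*n-1)
      * ((2 * (n:ℂ)) * (-1 : ℂ)^(n-1) * (ecoef n k)⁻¹)
      * (1 + -((n:ℂ) - 1) * bcoef n k * T) := ⟨_, rfl⟩
  have hnormpre : ‖T^(2*n-1) * (β:ℂ)^(2*n-1) * ((2 * (n:ℂ)) * (-1 : ℂ)^(n-1) * (ecoef n k)⁻¹)‖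
      = t^(2*n-1) * β^(2*n-1) * (2*(n:ℝ)) := by
    rw [norm_mul, norm_mul, norm_mul, norm_mul, norm_pow, norm_pow, norm_pow, hTnorm,
      norm_neg, norm_one, one_pow, mul_one, norm_inv, abs_ecoef n hn, inv_one, mul_one,
      Complex.norm_real, Real.norm_eq_abs, abs_of_pos hβ0]
    congr 2
    rw [show (2 * (n:ℂ)) = (((2*(n:ℝ) : ℝ)) : ℂ) by push_cast; ring, Complex.norm_real,
      Real.norm_eq_abs, abs_of_pos (by linarith)]
  have hstepC : ‖∏ j ∈ Finset.univ.erase k, w j - Y‖ ≤ K₂ * (δ * t) := by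
    rw [hprodw, hY_def]
    have key : T^(2*n-1) * ((∏ j ∈ Finset.univ.erase k, (bcoef n k - bcoef n j))
          * ∏ j ∈ Finset.univ.erase k, (1 + x j))
        - T^(2*n-1) * (β:ℂ)^(2*n-1) * ((2 * (n:ℂ)) * (-1 : ℂ)^(n-1) * (ecoef n k)⁻¹)
          * (1 + -((n:ℂ) - 1) * bcoef n k * T)
        = (T^(2*n-1) * (β:ℂ)^(2*n-1) * ((2 * (n:ℂ)) * (-1 : ℂ)^(n-1) * (ecoef n k)⁻¹))
          * ((∏ j ∈ Finset.univ.erase k, (1 + x j))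
              - (1 + ∑ j ∈ Finset.univ.erase k, x j)) := by
      rw [hprodb, hsumx]
      ring
    rw [key, norm_mul, hnormpre]
    calc t^(2*n-1) * β^(2*n-1) * (2*(n:ℝ))
          * ‖(∏ j ∈ Finset.univ.erase k, (1 + x j)) - (1 + ∑ j ∈ Finset.univ.erase k, x j)‖
        ≤ t^(2*n-1) * β^(2*n-1) * (2*(n:ℝ)) * (3^(2*n) * v^2) := by
          apply mul_le_mul_of_nonneg_left hprod1x (by positivity)
      _ = K₂ * (t^(2*n-1) * t^2) := by
          rw [hK₂_def, hv_def]
          ring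
      _ = K₂ * (δ * t) := by
          rw [← pow_add, show 2*n-1+2 = 2*n+1 from by omega, pow_succ, ht2n]
  -- Step D
  have hn1R : (0:ℝ) ≤ (n:ℝ) - 1 := by
    have : (1:ℝ) ≤ (n:ℝ) := by exact_mod_cast hn
    linarith
  have e1 : Complex.ofReal (Cr ^ ((2 * (n : ℝ) - 1) / (2 * (n : ℝ))))
      * Complex.ofReal ((1 - r^2) ^ ((2 * (n : ℝ) - 1) / (2 * (n : ℝ))))
      = Complex.ofReal (q^(2*n-1)) := by
    rw [← Complex.ofReal_mul]
    congr 1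
    rw [hq_eq, rpow_pow _ (mul_pos hCr0 h1r2).le _ (2*n-1),
      show (1:ℝ)/(2*(n:ℝ)) * ((2*n-1 : ℕ):ℝ) = (2 * (n : ℝ) - 1) / (2 * (n : ℝ)) by
        push_cast [Nat.cast_sub (by omega : 1 ≤ 2*n)]; field_simp,
      Real.mul_rpow hCr0.le h1r2.le]
  have e2 : (Complex.ofReal ((((n:ℝ) - 1) * Cr ^ ((1:ℝ)/(2*(n:ℝ)))) : ℝ)) * ecoef n k
      * Complex.ofReal ((1 - r ^ 2) ^ ((1 : ℝ) / (2 * (n : ℝ))))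
      = Complex.ofReal (((n:ℝ)-1) * q) * ecoef n k := by
    rw [hq_def, hs1_def]
    push_cast
    ring
  have e3 : T^(2*n-1) * (β:ℂ)^(2*n-1) = Complex.ofReal (v^(2*n-1)) := by
    rw [hv_def, hT_def]
    push_cast
    ring
  have e4 : -((n:ℂ) - 1) * bcoef n k * T = -Complex.ofReal (((n:ℝ)-1) * v) * ecoef n k := by
    rw [hbc, hv_def, hT_def]
    push_cast
    ring
  have hnormFac : ‖(2 * (n:ℂ)) * (-1 : ℂ)^(n-1) * (ecoef n k)⁻¹‖ = 2*(n:ℝ) := by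
    rw [norm_mul, norm_mul, norm_pow, norm_neg, norm_one, one_pow, mul_one, norm_inv,
      abs_ecoef n hn, inv_one, mul_one,
      show (2 * (n:ℂ)) = (((2*(n:ℝ) : ℝ)) : ℂ) by push_cast; ring, Complex.norm_real,
      Real.norm_eq_abs, abs_of_pos (by linarith)]
  have hstepD : ‖Y - (2 * (n : ℂ)) * (-1 : ℂ) ^ (n - 1) * (ecoef n k)⁻¹
      * Complex.ofReal (Cr ^ ((2 * (n : ℝ) - 1) / (2 * (n : ℝ))))
      * Complex.ofReal ((1 - r ^ 2) ^ ((2 * (n : ℝ) - 1) / (2 * (n : ℝ))))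
      * (1 - (Complex.ofReal ((((n:ℝ) - 1) * Cr ^ ((1:ℝ)/(2*(n:ℝ)))) : ℝ)) * ecoef n k
          * Complex.ofReal ((1 - r ^ 2) ^ ((1 : ℝ) / (2 * (n : ℝ)))))‖ ≤ K₃ * (δ * t) := by
    have key : Y - (2 * (n : ℂ)) * (-1 : ℂ) ^ (n - 1) * (ecoef n k)⁻¹
        * Complex.ofReal (Cr ^ ((2 * (n : ℝ) - 1) / (2 * (n : ℝ))))
        * Complex.ofReal ((1 - r ^ 2) ^ ((2 * (n : ℝ) - 1) / (2 * (n : ℝ))))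
        * (1 - (Complex.ofReal ((((n:ℝ) - 1) * Cr ^ ((1:ℝ)/(2*(n:ℝ)))) : ℝ)) * ecoef n k
            * Complex.ofReal ((1 - r ^ 2) ^ ((1 : ℝ) / (2 * (n : ℝ)))))
        = ((2 * (n:ℂ)) * (-1 : ℂ)^(n-1) * (ecoef n k)⁻¹)
          * (Complex.ofReal (v^(2*n-1) - q^(2*n-1))
             - ecoef n k * Complex.ofReal (((n:ℝ)-1) * (v^(2*n) - q^(2*n)))) := by
      rw [hY_def]
      calc T^(2*n-1) * (β:ℂ)^(2*n-1) * ((2 * (n:ℂ)) * (-1 : ℂ)^(n-1) * (ecoef n k)⁻¹)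
            * (1 + -((n:ℂ) - 1) * bcoef n k * T)
          - (2 * (n : ℂ)) * (-1 : ℂ) ^ (n - 1) * (ecoef n k)⁻¹
            * Complex.ofReal (Cr ^ ((2 * (n : ℝ) - 1) / (2 * (n : ℝ))))
            * Complex.ofReal ((1 - r ^ 2) ^ ((2 * (n : ℝ) - 1) / (2 * (n : ℝ))))
            * (1 - (Complex.ofReal ((((n:ℝ) - 1) * Cr ^ ((1:ℝ)/(2*(n:ℝ)))) : ℝ)) * ecoef n k
                * Complex.ofReal ((1 - r ^ 2) ^ ((1 : ℝ) / (2 * (n : ℝ)))))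
          = ((2 * (n:ℂ)) * (-1 : ℂ)^(n-1) * (ecoef n k)⁻¹)
            * (Complex.ofReal (v^(2*n-1)) * (1 + -Complex.ofReal (((n:ℝ)-1) * v) * ecoef n k)
               - Complex.ofReal (q^(2*n-1)) * (1 - Complex.ofReal (((n:ℝ)-1) * q) * ecoef n k)) := by
            rw [← e3, ← e4]
            rw [show (2 * (n : ℂ)) * (-1 : ℂ) ^ (n - 1) * (ecoef n k)⁻¹
                * Complex.ofReal (Cr ^ ((2 * (n : ℝ) - 1) / (2 * (n : ℝ))))
                * Complex.ofReal ((1 - r ^ 2) ^ ((2 * (n : ℝ) - 1) / (2 * (n : ℝ))))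
                * (1 - (Complex.ofReal ((((n:ℝ) - 1) * Cr ^ ((1:ℝ)/(2*(n:ℝ)))) : ℝ)) * ecoef n k
                    * Complex.ofReal ((1 - r ^ 2) ^ ((1 : ℝ) / (2 * (n : ℝ)))))
              = ((2 * (n:ℂ)) * (-1 : ℂ)^(n-1) * (ecoef n k)⁻¹)
                * ((Complex.ofReal (Cr ^ ((2 * (n : ℝ) - 1) / (2 * (n : ℝ))))
                    * Complex.ofReal ((1 - r ^ 2) ^ ((2 * (n : ℝ) - 1) / (2 * (n : ℝ)))))
                   * (1 - (Complex.ofReal ((((n:ℝ) - 1) * Cr ^ ((1:ℝ)/(2*(n:ℝ)))) : ℝ)) * ecoef n k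
                      * Complex.ofReal ((1 - r ^ 2) ^ ((1 : ℝ) / (2 * (n : ℝ)))))) from by ring]
            rw [e1, e2]
            ring
        _ = ((2 * (n:ℂ)) * (-1 : ℂ)^(n-1) * (ecoef n k)⁻¹)
            * (Complex.ofReal (v^(2*n-1) - q^(2*n-1))
               - ecoef n k * Complex.ofReal (((n:ℝ)-1) * (v^(2*n) - q^(2*n)))) := by
            have hvv : (v:ℝ)^(2*n-1) * v = v^(2*n) := by
              rw [← pow_succ, show 2*n-1+1 = 2*n from by omega]
            have hqq : (q:ℝ)^(2*n-1) * q = q^(2*n) := by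
              rw [← pow_succ, show 2*n-1+1 = 2*n from by omega]
            rw [← hvv, ← hqq]
            push_cast
            ring
    rw [key, norm_mul, hnormFac]
    have hb1 : ‖Complex.ofReal (v^(2*n-1) - q^(2*n-1))
        - ecoef n k * Complex.ofReal (((n:ℝ)-1) * (v^(2*n) - q^(2*n)))‖
        ≤ (v^(2*n-1) - q^(2*n-1)) + ((n:ℝ)-1) * (Cr * δ^2) := by
      calc ‖Complex.ofReal (v^(2*n-1) - q^(2*n-1))
          - ecoef n k * Complex.ofReal (((n:ℝ)-1) * (v^(2*n) - q^(2*n)))‖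
          ≤ ‖Complex.ofReal (v^(2*n-1) - q^(2*n-1))‖
            + ‖ecoef n k * Complex.ofReal (((n:ℝ)-1) * (v^(2*n) - q^(2*n)))‖ := norm_sub_le _ _
        _ = |v^(2*n-1) - q^(2*n-1)| + |((n:ℝ)-1) * (v^(2*n) - q^(2*n))| := by
            rw [norm_mul, abs_ecoef n hn, one_mul, Complex.norm_real, Complex.norm_real,
              Real.norm_eq_abs, Real.norm_eq_abs]
        _ = (v^(2*n-1) - q^(2*n-1)) + ((n:ℝ)-1) * (Cr * δ^2) := by
            rw [_root_.abs_of_nonneg hD1nn, hdiff2n, _root_.abs_of_nonneg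
              (mul_nonneg hn1R (mul_nonneg hCr0.le (sq_nonneg δ)))]
    have hd2 : ((n:ℝ)-1) * (Cr * δ^2) ≤ (n:ℝ) * Cr * (δ * t) := by
      have hδ2 : δ^2 ≤ δ * t := by
        have : δ = t^(2*n) := ht2n.symm
        rw [this]
        calc (t^(2*n))^2 = t^(2*n) * t^(2*n) := sq _
          _ ≤ t^(2*n) * t := by
              have h := pow_le_pow_of_le_one ht0.le ht1 (show 1 ≤ 2*n by omega)
              rw [pow_one] at h
              exact mul_le_mul_of_nonneg_left h (pow_nonneg ht0.le _)
      calc ((n:ℝ)-1) * (Cr * δ^2) ≤ ((n:ℝ)-1) * (Cr * (δ*t)) := by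
            apply mul_le_mul_of_nonneg_left ?_ hn1R
            exact mul_le_mul_of_nonneg_left hδ2 hCr0.le
        _ ≤ (n:ℝ) * (Cr * (δ * t)) := by
            have h0 : 0 ≤ Cr * (δ*t) := mul_nonneg hCr0.le (mul_nonneg hδ0'.le ht0.le)
            exact mul_le_mul_of_nonneg_right (by linarith : (n:ℝ) - 1 ≤ (n:ℝ)) h0
        _ = (n:ℝ) * Cr * (δ * t) := (mul_assoc _ _ _).symm
    calc 2*(n:ℝ) * ‖Complex.ofReal (v^(2*n-1) - q^(2*n-1))
        - ecoef n k * Complex.ofReal (((n:ℝ)-1) * (v^(2*n) - q^(2*n)))‖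
        ≤ 2*(n:ℝ) * ((v^(2*n-1) - q^(2*n-1)) + ((n:ℝ)-1) * (Cr * δ^2)) := by
          apply mul_le_mul_of_nonneg_left hb1 (by linarith)
      _ ≤ 2*(n:ℝ) * (Cr * δ * t + (n:ℝ) * Cr * (δ * t)) := by
          apply mul_le_mul_of_nonneg_left ?_ (by linarith)
          have := hD1
          linarith [hd2]
      _ = K₃ * (δ * t) := by rw [hK₃_def]; ring
  -- combine
  rw [← hCr_def]
  have htri : ‖(∏ j ∈ Finset.univ.erase k, (zs k r - zs j r))
      - (2 * (n : ℂ)) * (-1 : ℂ) ^ (n - 1) * (ecoef n k)⁻¹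
        * Complex.ofReal (Cr ^ ((2 * (n : ℝ) - 1) / (2 * (n : ℝ))))
        * Complex.ofReal ((1 - r ^ 2) ^ ((2 * (n : ℝ) - 1) / (2 * (n : ℝ))))
        * (1 - (Complex.ofReal ((((n:ℝ) - 1) * Cr ^ ((1:ℝ)/(2*(n:ℝ)))) : ℝ)) * ecoef n k
            * Complex.ofReal ((1 - r ^ 2) ^ ((1 : ℝ) / (2 * (n : ℝ)))))‖
      ≤ (K₁ + K₂ + K₃) * (δ * t) := by
    have hsplit : (∏ j ∈ Finset.univ.erase k, (zs k r - zs j r))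
        - (2 * (n : ℂ)) * (-1 : ℂ) ^ (n - 1) * (ecoef n k)⁻¹
          * Complex.ofReal (Cr ^ ((2 * (n : ℝ) - 1) / (2 * (n : ℝ))))
          * Complex.ofReal ((1 - r ^ 2) ^ ((2 * (n : ℝ) - 1) / (2 * (n : ℝ))))
          * (1 - (Complex.ofReal ((((n:ℝ) - 1) * Cr ^ ((1:ℝ)/(2*(n:ℝ)))) : ℝ)) * ecoef n k
              * Complex.ofReal ((1 - r ^ 2) ^ ((1 : ℝ) / (2 * (n : ℝ)))))
        = ((∏ j ∈ Finset.univ.erase k, (zs k r - zs j r)) - ∏ j ∈ Finset.univ.erase k, w j)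
          + ((∏ j ∈ Finset.univ.erase k, w j - Y)
            + (Y - (2 * (n : ℂ)) * (-1 : ℂ) ^ (n - 1) * (ecoef n k)⁻¹
              * Complex.ofReal (Cr ^ ((2 * (n : ℝ) - 1) / (2 * (n : ℝ))))
              * Complex.ofReal ((1 - r ^ 2) ^ ((2 * (n : ℝ) - 1) / (2 * (n : ℝ))))
              * (1 - (Complex.ofReal ((((n:ℝ) - 1) * Cr ^ ((1:ℝ)/(2*(n:ℝ)))) : ℝ)) * ecoef n k
                  * Complex.ofReal ((1 - r ^ 2) ^ ((1 : ℝ) / (2 * (n : ℝ))))))) := by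
      ring
    rw [hsplit]
    calc ‖_ + _‖ ≤ ‖(∏ j ∈ Finset.univ.erase k, (zs k r - zs j r))
          - ∏ j ∈ Finset.univ.erase k, w j‖
          + (‖∏ j ∈ Finset.univ.erase k, w j - Y‖
            + ‖Y - (2 * (n : ℂ)) * (-1 : ℂ) ^ (n - 1) * (ecoef n k)⁻¹
              * Complex.ofReal (Cr ^ ((2 * (n : ℝ) - 1) / (2 * (n : ℝ))))
              * Complex.ofReal ((1 - r ^ 2) ^ ((2 * (n : ℝ) - 1) / (2 * (n : ℝ))))
              * (1 - (Complex.ofReal ((((n:ℝ) - 1) * Cr ^ ((1:ℝ)/(2*(n:ℝ)))) : ℝ)) * ecoef n k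
                  * Complex.ofReal ((1 - r ^ 2) ^ ((1 : ℝ) / (2 * (n : ℝ)))))‖) :=
          le_trans (norm_add_le _ _) (by
            have := norm_add_le (∏ j ∈ Finset.univ.erase k, w j - Y)
              (Y - (2 * (n : ℂ)) * (-1 : ℂ) ^ (n - 1) * (ecoef n k)⁻¹
              * Complex.ofReal (Cr ^ ((2 * (n : ℝ) - 1) / (2 * (n : ℝ))))
              * Complex.ofReal ((1 - r ^ 2) ^ ((2 * (n : ℝ) - 1) / (2 * (n : ℝ))))
              * (1 - (Complex.ofReal ((((n:ℝ) - 1) * Cr ^ ((1:ℝ)/(2*(n:ℝ)))) : ℝ)) * ecoef n k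
                  * Complex.ofReal ((1 - r ^ 2) ^ ((1 : ℝ) / (2 * (n : ℝ))))))
            linarith)
      _ ≤ K₁ * (δ * t) + (K₂ * (δ * t) + K₃ * (δ * t)) :=
          add_le_add hstepA (add_le_add hstepC hstepD)
      _ = (K₁ + K₂ + K₃) * (δ * t) := by ring
  have hE0 : 0 ≤ (2 * (n : ℝ) - 1) / (2 * (n : ℝ)) + 1 / (n : ℝ) := by
    have h1 : (0:ℝ) ≤ (2 * (n : ℝ) - 1) / (2 * (n : ℝ)) := by
      apply div_nonneg ?_ (by linarith)
      have : (1:ℝ) ≤ (n:ℝ) := by exact_mod_cast hn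
      linarith
    have h2 : (0:ℝ) ≤ 1 / (n : ℝ) := by positivity
    linarith
  have hpow_eq : δ * t = δ ^ ((2 * (n : ℝ) - 1) / (2 * (n : ℝ)) + 1 / (n : ℝ)) := by
    have hexp : (2 * (n : ℝ) - 1) / (2 * (n : ℝ)) + 1 / (n : ℝ) = 1 + 1/(2*(n:ℝ)) := by
      field_simp
      ring
    rw [hexp, Real.rpow_add hδ0', Real.rpow_one, ← ht_def]
  have hmono : δ ^ ((2 * (n : ℝ) - 1) / (2 * (n : ℝ)) + 1 / (n : ℝ))
      ≤ (1 - r^2) ^ ((2 * (n : ℝ) - 1) / (2 * (n : ℝ)) + 1 / (n : ℝ)) :=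
    Real.rpow_le_rpow hδ0'.le hδ1r2 hE0
  refine le_trans htri ?_
  rw [hpow_eq]
  have hδt0 : 0 ≤ δ ^ ((2 * (n : ℝ) - 1) / (2 * (n : ℝ)) + 1 / (n : ℝ)) :=
    Real.rpow_nonneg hδ0'.le _
  calc (K₁ + K₂ + K₃) * δ ^ ((2 * (n : ℝ) - 1) / (2 * (n : ℝ)) + 1 / (n : ℝ))
      ≤ (K₁ + K₂ + K₃ + 1) * ((1 - r^2) ^ ((2 * (n : ℝ) - 1) / (2 * (n : ℝ)) + 1 / (n : ℝ))) :=
        mul_le_mul (by linarith) hmono hδt0 (by linarith)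
    _ = (K₁ + K₂ + K₃ + 1) * (1 - r^2) ^ ((2 * (n : ℝ) - 1) / (2 * (n : ℝ)) + 1 / (n : ℝ)) := by
        ring
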